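/- For every particle configuration σ and every rotor configuration ρ on G, the stabilization σ° of σ satisfies σ°ρ = σρ. Consequently the action of particle configurations on rotor configurations descends to an action of the sandpile monoid Q° on rotor configurations. -/

import Mathlib

open Function

/-- A strongly connected finite directed multigraph (self-loops and multiple arcs
allowed), given by source and head maps `src, head : E → V`, together with a nonempty
target set `T` and a rotor mechanism at each vertex: `next` is a cyclic ordering of
the arcs emanating from each vertex (it permutes the arcs, preserves the source, and
acts transitively on the arcs emanating from any fixed vertex). -/
structure RotorSystem (V E : Type) [Fintype V] [DecidableEq V] [Fintype E]
    [DecidableEq E] where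
  src : E → V
  head : E → V
  T : Finset V
  T_nonempty : T.Nonempty
  strongly_connected : ∀ v w : V,
    Relation.ReflTransGen (fun a b => ∃ e : E, src e = a ∧ head e = b) v w
  next : E → E
  next_src : ∀ e, src (next e) = src e
  next_bijective : Function.Bijective next
  next_cyclic : ∀ e e', src e = src e' → ∃ k : ℕ, next^[k] e = e'

namespace RotorSystem

variable {V E : Type} [Fintype V] [DecidableEq V] [Fintype E] [DecidableEq E]

/-- The set `V₀ = V - T` of non-target vertices. -/
abbrev V0 (S : RotorSystem V E) : Type := {v : V // v ∉ S.T}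

/-- A rotor configuration: each non-target vertex carries an arc emanating from it. -/
abbrev RConf (S : RotorSystem V E) : Type :=
  {ρ : S.V0 → E // ∀ v : S.V0, S.src (ρ v) = v.1}

/-- A particle configuration: a number of particles at each non-target vertex. -/
abbrev PConf (S : RotorSystem V E) : Type := S.V0 → ℕ

variable (S : RotorSystem V E)

/-- One step of a single particle's rotor walk: at a non-target vertex the rotor is
first progressed and the particle then moves along the new rotor arc; target vertices
absorb the particle. -/
def step (p : V × S.RConf) : V × S.RConf :=
  if h : p.1 ∈ S.T then p
  else
    (S.head (S.next (p.2.1 ⟨p.1, h⟩)),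
      ⟨Function.update p.2.1 ⟨p.1, h⟩ (S.next (p.2.1 ⟨p.1, h⟩)), by
        intro w
        rcases eq_or_ne w ⟨p.1, h⟩ with rfl | hw
        · rw [Function.update_self, S.next_src]
          exact p.2.2 ⟨p.1, h⟩
        · rw [Function.update_of_ne hw]
          exact p.2.2 w⟩)

open Classical in
/-- Route a single particle from `x` by rotor walk until it first reaches the target
set; the result is the pair (final position, final rotor configuration). -/
noncomputable def route (x : V) (ρ : S.RConf) : V × S.RConf :=
  if h : ∃ n, (S.step^[n] (x, ρ)).1 ∈ S.T then S.step^[Nat.find h] (x, ρ) else (x, ρ)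

/-- `t_x(ρ)`: the target vertex reached by a single particle started at `x` with
initial rotor configuration `ρ`. -/
noncomputable def tgt (x : V) (ρ : S.RConf) : V := (S.route x ρ).1

/-- The particle addition operator `E_v`: add one particle at `v` and route it to the
target set. -/
noncomputable def addAt (v : S.V0) (ρ : S.RConf) : S.RConf := (S.route v.1 ρ).2

/-- The action `σρ` of a particle configuration on a rotor configuration: place
`σ v` particles at each vertex `v` and route them all to the target set. -/
noncomputable def act (σ : S.PConf) (ρ : S.RConf) : S.RConf :=
  (Finset.univ : Finset S.V0).toList.foldr (fun v r => (S.addAt v)^[σ v] r) ρ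

/-- Equivalence of rotor configurations: `ρ ≡ ρ'` iff `σρ = σρ'` for some particle
configuration `σ`. -/
def REquiv (ρ ρ' : S.RConf) : Prop := ∃ σ : S.PConf, S.act σ ρ = S.act σ ρ'

/-- The outdegree `d(v)`. -/
def outdeg (v : V) : ℕ := (Finset.univ.filter fun e : E => S.src e = v).card

/-- The number `d(v,w)` of arcs from `v` to `w`. -/
def numArcs (v w : V) : ℕ :=
  (Finset.univ.filter fun e : E => S.src e = v ∧ S.head e = w).card

/-- A particle configuration is stable if every non-target vertex holds at most
`d(v) - 1` particles. -/
def IsStable (σ : S.PConf) : Prop := ∀ v : S.V0, σ v < S.outdeg v.1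

/-- Parallel toppling: every unstable vertex topples once, sending one particle along
each arc emanating from it. -/
def toppleStep (σ : S.PConf) : S.PConf := fun v =>
  (if S.outdeg v.1 ≤ σ v then σ v - S.outdeg v.1 else σ v) +
    ∑ w : S.V0, (if S.outdeg w.1 ≤ σ w then S.numArcs w.1 v.1 else 0)

open Classical in
/-- The stabilization `σ°` of a particle configuration. -/
noncomputable def stabilize (σ : S.PConf) : S.PConf :=
  if h : ∃ n, S.IsStable (S.toppleStep^[n] σ) then S.toppleStep^[Nat.find h] σ else σ

/-- A stable particle configuration is recurrent if it is reachable (by adding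
particles and stabilizing) from every particle configuration.  The recurrent
configurations form the sandpile group `S(G/T)` under addition-then-stabilization. -/
def IsRecurrent (τ : S.PConf) : Prop :=
  S.IsStable τ ∧ ∀ σ : S.PConf, ∃ τ' : S.PConf, τ = S.stabilize (τ' + σ)

/-- `e` is the identity element of the sandpile group `S(G/T)`. -/
def IsSandpileIdentity (e : S.PConf) : Prop :=
  S.IsRecurrent e ∧ ∀ τ : S.PConf, S.IsRecurrent τ → S.stabilize (e + τ) = τ

/-- The rotor arcs of `ρ`, as a relation on vertices. -/
def rotorRel (ρ : S.RConf) (a b : V) : Prop :=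
  ∃ h : a ∉ S.T, S.head (ρ.1 ⟨a, h⟩) = b

/-- A rotor configuration is acyclic if its rotor arcs contain no directed cycle. -/
def IsAcyclicConf (ρ : S.RConf) : Prop :=
  ∀ v : V, ¬ Relation.TransGen (S.rotorRel ρ) v v

/-- `ρ'` is obtained from `ρ` by pushing a cycle: there are distinct non-target
vertices `v_0, …, v_{r-1}` with the rotor arc of `v_j` pointing to `v_{j+1}`
(cyclically); each such rotor is regressed one step, other rotors are unchanged. -/
def IsCyclePush (ρ ρ' : S.RConf) : Prop :=
  ∃ r : ℕ, 0 < r ∧ ∃ f : ZMod r → S.V0, Function.Injective f ∧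
    (∀ j : ZMod r, S.head (ρ.1 (f j)) = (f (j + 1)).1) ∧
    (∀ j : ZMod r, S.next (ρ'.1 (f j)) = ρ.1 (f j)) ∧
    (∀ v : S.V0, v ∉ Set.range f → ρ'.1 v = ρ.1 v)

end RotorSystem

open RotorSystem

namespace RotorAux

variable {V E : Type} [Fintype V] [DecidableEq V] [Fintype E] [DecidableEq E]
variable (S : RotorSystem V E)

/-- A multi-particle state: particle counts on non-target vertices, plus rotors. -/
abbrev St := S.PConf × S.RConf

/-- Fire one particle at `v`: progress the rotor at `v` and move one particle
along the new arc (absorbed if the head is a target). -/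
def fire (v : S.V0) (p : St S) : St S :=
  ((fun w => (if w = v then p.1 w - 1 else p.1 w) +
      (if w.1 = S.head (S.next (p.2.1 v)) then 1 else 0)),
   ⟨Function.update p.2.1 v (S.next (p.2.1 v)), by
      intro w
      rcases eq_or_ne w v with rfl | hw
      · rw [Function.update_self, S.next_src]; exact p.2.2 w
      · rw [Function.update_of_ne hw]; exact p.2.2 w⟩)

/-- `FireSeq l p q`: starting from `p`, firing the vertices in `l` in order is
legal (each fired vertex holds a particle) and leads to `q`. -/
def FireSeq : List S.V0 → St S → St S → Prop
  | [], p, q => p = q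
  | v :: l, p, q => 0 < p.1 v ∧ FireSeq l (fire S v p) q

lemma fireSeq_append {l₁ l₂ : List S.V0} {p q r : St S}
    (h₁ : FireSeq S l₁ p q) (h₂ : FireSeq S l₂ q r) : FireSeq S (l₁ ++ l₂) p r := by
  induction l₁ generalizing p with
  | nil => cases h₁; exact h₂
  | cons v l ih => exact ⟨h₁.1, ih h₁.2⟩

lemma fire_fst_le (v w : S.V0) (hvw : w ≠ v) (p : St S) :
    p.1 w ≤ (fire S v p).1 w := by
  simp only [fire, if_neg hvw]
  omega

lemma fire_comm (v w : S.V0) (hvw : v ≠ w) (p : St S)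
    (hv : 0 < p.1 v) (hw : 0 < p.1 w) :
    fire S v (fire S w p) = fire S w (fire S v p) := by
  obtain ⟨c, ρ⟩ := p
  have hρv : (fire S w (c, ρ)).2.1 v = ρ.1 v := Function.update_of_ne hvw _ _
  have hρw : (fire S v (c, ρ)).2.1 w = ρ.1 w := Function.update_of_ne hvw.symm _ _
  refine Prod.ext ?_ ?_
  · funext x
    show (if x = v then (fire S w (c, ρ)).1 x - 1 else (fire S w (c, ρ)).1 x) +
        (if x.1 = S.head (S.next ((fire S w (c, ρ)).2.1 v)) then 1 else 0) =
      (if x = w then (fire S v (c, ρ)).1 x - 1 else (fire S v (c, ρ)).1 x) +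
        (if x.1 = S.head (S.next ((fire S v (c, ρ)).2.1 w)) then 1 else 0)
    rw [hρv, hρw]
    show (if x = v then ((if x = w then c x - 1 else c x) +
          (if x.1 = S.head (S.next (ρ.1 w)) then 1 else 0)) - 1
        else ((if x = w then c x - 1 else c x) +
          (if x.1 = S.head (S.next (ρ.1 w)) then 1 else 0))) +
        (if x.1 = S.head (S.next (ρ.1 v)) then 1 else 0) =
      (if x = w then ((if x = v then c x - 1 else c x) +
          (if x.1 = S.head (S.next (ρ.1 v)) then 1 else 0)) - 1
        else ((if x = v then c x - 1 else c x) +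
          (if x.1 = S.head (S.next (ρ.1 v)) then 1 else 0))) +
        (if x.1 = S.head (S.next (ρ.1 w)) then 1 else 0)
    have hcv : 0 < c v := hv
    have hcw : 0 < c w := hw
    by_cases h1 : x = v <;> by_cases h2 : x = w
    · exact absurd (h1 ▸ h2) hvw
    all_goals subst_vars <;> simp_all <;> split_ifs <;> omega
  · apply Subtype.ext
    show Function.update (fire S w (c, ρ)).2.1 v (S.next ((fire S w (c, ρ)).2.1 v)) =
      Function.update (fire S v (c, ρ)).2.1 w (S.next ((fire S v (c, ρ)).2.1 w))
    rw [hρv, hρw]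
    show Function.update (Function.update ρ.1 w (S.next (ρ.1 w))) v (S.next (ρ.1 v)) =
      Function.update (Function.update ρ.1 v (S.next (ρ.1 v))) w (S.next (ρ.1 w))
    exact Function.update_comm hvw.symm _ _ _

lemma exists_head (v : S.V0) (β : List S.V0) (p q : St S)
    (h : FireSeq S β p q) (hq : ∀ u, q.1 u = 0) (hv : 0 < p.1 v) :
    ∃ γ, FireSeq S (v :: γ) p q := by
  induction β generalizing p with
  | nil => cases h; exact absurd (hq v) (by omega)
  | cons w β ih =>
    rcases eq_or_ne w v with rfl | hwv
    · exact ⟨β, h⟩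
    · have hv' : 0 < (fire S w p).1 v := lt_of_lt_of_le hv (fire_fst_le S w v hwv.symm p)
      obtain ⟨γ', hγ'⟩ := ih (fire S w p) h.2 hv'
      refine ⟨w :: γ', hv, ?_, ?_⟩
      · exact lt_of_lt_of_le h.1 (fire_fst_le S v w hwv p)
      · rw [← fire_comm S v w hwv.symm p hv h.1]
        exact hγ'.2

lemma confluence (α : List S.V0) : ∀ (β : List S.V0) (p q r : St S),
    FireSeq S α p q → (∀ u, q.1 u = 0) → FireSeq S β p r → (∀ u, r.1 u = 0) →
    q = r := by
  induction α with
  | nil =>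
    intro β p q r hα hq hβ hr
    cases hα
    cases β with
    | nil => cases hβ; rfl
    | cons w β => exact absurd (hq w) (by have := hβ.1; omega)
  | cons v α ih =>
    intro β p q r hα hq hβ hr
    obtain ⟨γ, hγ⟩ := exists_head S v β p r hβ hr hα.1
    exact ih γ (fire S v p) q r hα.2 hq hγ.2 hr

/-- `next` has a finite order as a permutation of the finite arc set. -/
lemma exists_period : ∃ p : ℕ, 0 < p ∧ ∀ e : E, S.next^[p] e = e := by
  obtain ⟨i, j, hij, h⟩ := Finite.exists_ne_map_eq_of_infinite (fun k : ℕ => S.next^[k])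
  rcases Nat.lt_or_ge i j with hlt | hge
  · refine ⟨j - i, by omega, fun e => ?_⟩
    have hinj : Function.Injective (S.next^[i]) := S.next_bijective.injective.iterate i
    apply hinj
    have : S.next^[i] (S.next^[j - i] e) = S.next^[j] e := by
      rw [← Function.iterate_add_apply]
      congr 1
      omega
    rw [this, ← h]
  · have hlt : j < i := by omega
    refine ⟨i - j, by omega, fun e => ?_⟩
    have hinj : Function.Injective (S.next^[j]) := S.next_bijective.injective.iterate j
    apply hinj
    have : S.next^[j] (S.next^[i - j] e) = S.next^[i] e := by
      rw [← Function.iterate_add_apply]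
      congr 1
      omega
    rw [this, h]

lemma step_of_mem {x : V} (hx : x ∈ S.T) (ρ : S.RConf) (n : ℕ) :
    S.step^[n] (x, ρ) = (x, ρ) := by
  induction n with
  | zero => rfl
  | succ n ih =>
    rw [Function.iterate_succ_apply, show S.step (x, ρ) = (x, ρ) from dif_pos hx, ih]

lemma step_of_not_mem {x : V} (hx : x ∉ S.T) (ρ : S.RConf) :
    S.step (x, ρ) = (S.head (S.next (ρ.1 ⟨x, hx⟩)), (fire S ⟨x, hx⟩ (0, ρ)).2) := by
  rw [RotorSystem.step, dif_neg hx]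
  rfl

lemma fire_snd (v : S.V0) (c c' : S.PConf) (ρ : S.RConf) :
    (fire S v (c, ρ)).2 = (fire S v (c', ρ)).2 := rfl

lemma fire_start (v : S.V0) (c : S.PConf) (ρ : S.RConf) :
    fire S v ((fun w => c w + if w.1 = v.1 then 1 else 0), ρ) =
      ((fun w => c w + if w.1 = S.head (S.next (ρ.1 v)) then 1 else 0),
        (fire S v (0, ρ)).2) := by
  refine Prod.ext ?_ rfl
  funext w
  show (if w = v then (c w + if w.1 = v.1 then 1 else 0) - 1
      else (c w + if w.1 = v.1 then 1 else 0)) +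
      (if w.1 = S.head (S.next (ρ.1 v)) then 1 else 0) =
    c w + (if w.1 = S.head (S.next (ρ.1 v)) then 1 else 0)
  by_cases h : w = v
  · subst h; simp
  · rw [if_neg h, if_neg (fun hh => h (Subtype.ext hh)), add_zero]

lemma stepFire (n : ℕ) : ∀ (x : V) (ρ : S.RConf) (c : S.PConf),
    (S.step^[n] (x, ρ)).1 ∈ S.T →
    ∃ l, FireSeq S l ((fun w => c w + if w.1 = x then 1 else 0), ρ)
      (c, (S.step^[n] (x, ρ)).2) := by
  induction n with
  | zero =>
    intro x ρ c hx
    refine ⟨[], ?_⟩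
    have hc : (fun w : S.V0 => c w + if w.1 = x then 1 else 0) = c := by
      funext w
      rw [if_neg, add_zero]
      rintro rfl
      exact w.2 hx
    show ((fun w : S.V0 => c w + if w.1 = x then 1 else 0), ρ) = (c, ρ)
    rw [hc]
  | succ n ih =>
    intro x ρ c hx
    by_cases hxT : x ∈ S.T
    · rw [step_of_mem S hxT] at hx ⊢
      refine ⟨[], ?_⟩
      have hc : (fun w : S.V0 => c w + if w.1 = x then 1 else 0) = c := by
        funext w
        rw [if_neg, add_zero]
        rintro rfl
        exact w.2 hxT
      show ((fun w : S.V0 => c w + if w.1 = x then 1 else 0), ρ) = (c, ρ)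
      rw [hc]
    · set v : S.V0 := ⟨x, hxT⟩ with hv
      set x' := S.head (S.next (ρ.1 v)) with hx'
      set ρ' : S.RConf := (fire S v (0, ρ)).2 with hρ'
      have hstep : S.step (x, ρ) = (x', ρ') := step_of_not_mem S hxT ρ
      rw [Function.iterate_succ_apply, hstep] at hx ⊢
      obtain ⟨l, hl⟩ := ih x' ρ' c hx
      refine ⟨v :: l, ?_, ?_⟩
      · show 0 < c v + if (v : V0 S).1 = x then 1 else 0
        simp [hv]
      · rw [show (fire S v ((fun w => c w + if w.1 = x then 1 else 0), ρ)) =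
            ((fun w => c w + if w.1 = x' then 1 else 0), ρ') from fire_start S v c ρ]
        exact hl

lemma iterate_mul_period {p : ℕ} (hp : ∀ e : E, S.next^[p] e = e) :
    ∀ (m : ℕ) (e : E), S.next^[p * m] e = e := by
  intro m
  induction m with
  | zero => intro e; rfl
  | succ m ih =>
    intro e
    rw [show p * (m + 1) = p + p * m by ring, Function.iterate_add_apply, ih, hp]

/-- **Termination**: every rotor walk reaches the target set. -/
lemma route_terminates (x : V) (ρ : S.RConf) :
    ∃ n, (S.step^[n] (x, ρ)).1 ∈ S.T := by
  by_contra hcon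
  push_neg at hcon
  set P : ℕ → V × S.RConf := fun n => S.step^[n] (x, ρ) with hPdef
  have hP : ∀ n, (P n).1 ∉ S.T := hcon
  have hPsucc : ∀ n, P (n + 1) = S.step (P n) := fun n =>
    Function.iterate_succ_apply' _ _ _
  set Y : ℕ → S.V0 := fun n => ⟨(P n).1, hP n⟩ with hYdef
  have hstep2 : ∀ n, P (n + 1) =
      (S.head (S.next ((P n).2.1 (Y n))), (fire S (Y n) (0, (P n).2)).2) := by
    intro n
    rw [hPsucc n]
    exact step_of_not_mem S (hP n) (P n).2
  have hX : ∀ n, (P (n + 1)).1 = S.head (S.next ((P n).2.1 (Y n))) := by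
    intro n
    rw [hstep2 n]
  have hRupd : ∀ n, (P (n + 1)).2.1 =
      Function.update (P n).2.1 (Y n) (S.next ((P n).2.1 (Y n))) := by
    intro n
    rw [hstep2 n]
    rfl
  -- visit counts
  set N : S.V0 → ℕ → ℕ :=
    fun v n => ((Finset.range n).filter (fun i => Y i = v)).card with hNdef
  have hNsucc : ∀ v n, N v (n + 1) = N v n + (if Y n = v then 1 else 0) := by
    intro v n
    show ((Finset.range (n+1)).filter (fun i => Y i = v)).card = _
    rw [Finset.range_add_one, Finset.filter_insert]
    split_ifs with h
    · rw [Finset.card_insert_of_notMem (fun hc => by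
        simpa using (Finset.mem_filter.mp hc).1)]
    · rw [add_zero]
  have hNmono : ∀ v {m n : ℕ}, m ≤ n → N v m ≤ N v n := by
    intro v m n hmn
    exact Finset.card_le_card
      (Finset.filter_subset_filter _ (Finset.range_subset_range.mpr hmn))
  have hNle : ∀ v n, N v n ≤ n := by
    intro v n
    calc N v n ≤ (Finset.range n).card := Finset.card_filter_le _ _
    _ = n := Finset.card_range n
  -- rotor tracking
  have htrack : ∀ n (v : S.V0), (P n).2.1 v = S.next^[N v n] (ρ.1 v) := by
    intro n
    induction n with
    | zero =>
      intro v
      show ρ.1 v = S.next^[N v 0] (ρ.1 v)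
      have : N v 0 = 0 := by simp [hNdef]
      rw [this]
      rfl
    | succ n ih =>
      intro v
      rw [hRupd n, hNsucc v n]
      rcases eq_or_ne v (Y n) with heq | hv
      · rw [heq, Function.update_self, ih (Y n), if_pos rfl,
          show S.next (S.next^[N (Y n) n] (ρ.1 (Y n))) = S.next^[N (Y n) n + 1] (ρ.1 (Y n)) from
            (Function.iterate_succ_apply' _ _ _).symm]
      · rw [Function.update_of_ne hv, ih v, if_neg (fun h => hv h.symm), add_zero]
  -- some vertex is visited infinitely often
  have hInf : ∃ v : S.V0, ∀ NN, ∃ n, NN ≤ n ∧ Y n = v := by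
    obtain ⟨v, hv⟩ := Finite.exists_infinite_fiber Y
    refine ⟨v, fun NN => ?_⟩
    obtain ⟨n, hns, hlt⟩ := (Set.infinite_coe_iff.mp hv).exists_gt NN
    exact ⟨n, le_of_lt hlt, hns⟩
  obtain ⟨vInf, hvInf⟩ := hInf
  obtain ⟨p, hp0, hp⟩ := exists_period S
  -- every count value is attained at a visit time
  have hattain : ∀ (v : S.V0), (∀ NN, ∃ n, NN ≤ n ∧ Y n = v) →
      ∀ j, ∃ m, Y m = v ∧ N v m = j := by
    intro v hv j
    have hub : ∀ j, ∃ n, j ≤ N v n := by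
      intro j
      induction j with
      | zero => exact ⟨0, Nat.zero_le _⟩
      | succ j ih =>
        obtain ⟨n, hn⟩ := ih
        obtain ⟨m, hnm, hm⟩ := hv n
        refine ⟨m + 1, ?_⟩
        rw [hNsucc v m, if_pos hm]
        have := hNmono v hnm
        omega
    obtain ⟨n, hn⟩ := hub (j + 1)
    have hex : ∃ n, j + 1 ≤ N v n := ⟨n, hn⟩
    have hfind := Nat.find_spec hex
    have hne : Nat.find hex ≠ 0 := by
      intro h0
      rw [h0] at hfind
      have : N v 0 = 0 := by simp [hNdef]
      omega
    obtain ⟨m, hm⟩ := Nat.exists_eq_succ_of_ne_zero hne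
    have hmin := Nat.find_min hex (m := m) (by omega)
    rw [hm] at hfind
    rw [hNsucc v m] at hfind
    by_cases hY : Y m = v
    · rw [if_pos hY] at hfind
      exact ⟨m, hY, by omega⟩
    · rw [if_neg hY] at hfind
      omega
  -- closure of the infinitely-visited set under out-arcs
  have hclosure : ∀ (v : S.V0), (∀ NN, ∃ n, NN ≤ n ∧ Y n = v) →
      ∀ e : E, S.src e = v.1 →
      ∃ hT : S.head e ∉ S.T, ∀ NN, ∃ n, NN ≤ n ∧ Y n = ⟨S.head e, hT⟩ := by
    intro v hv e he
    obtain ⟨k₀, hk₀⟩ := S.next_cyclic (ρ.1 v) e (by rw [ρ.2 v, he])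
    have harc : ∀ mm : ℕ, 1 ≤ mm → ∃ m, (k₀ + p * mm) - 1 ≤ m ∧
        (P (m + 1)).1 = S.head e := by
      intro mm hmm
      obtain ⟨m, hYm, hNm⟩ := hattain v hv ((k₀ + p * mm) - 1)
      have hple : 1 ≤ p * mm := by
        have := Nat.mul_le_mul hp0 hmm
        omega
      refine ⟨m, le_trans (le_of_eq rfl) (hNm ▸ hNle v m), ?_⟩
      rw [hX m]
      have hYv : (P m).2.1 (Y m) = (P m).2.1 v := by rw [hYm]
      rw [hYv, htrack m v, hNm,
        show S.next (S.next^[k₀ + p * mm - 1] (ρ.1 v)) =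
          S.next^[(k₀ + p * mm - 1) + 1] (ρ.1 v) from
          (Function.iterate_succ_apply' _ _ _).symm,
        show (k₀ + p * mm - 1) + 1 = k₀ + p * mm from by omega,
        Function.iterate_add_apply, iterate_mul_period S hp, hk₀]
    obtain ⟨m₁, _, hm₁⟩ := harc 1 le_rfl
    have hT : S.head e ∉ S.T := hm₁ ▸ hP (m₁ + 1)
    refine ⟨hT, fun NN => ?_⟩
    obtain ⟨m, hmge, hm⟩ := harc (NN + 1) (by omega)
    refine ⟨m + 1, ?_, ?_⟩
    · have : NN + 1 ≤ p * (NN + 1) := Nat.le_mul_of_pos_left _ hp0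
      omega
    · exact Subtype.ext hm
  -- strong connectivity: the target set would be visited
  obtain ⟨t, ht⟩ := S.T_nonempty
  have hchain : ∀ b : V,
      Relation.ReflTransGen (fun a b => ∃ e : E, S.src e = a ∧ S.head e = b) vInf.1 b →
      ∃ hb : b ∉ S.T, ∀ NN, ∃ n, NN ≤ n ∧ Y n = ⟨b, hb⟩ := by
    intro b hb
    induction hb with
    | refl => exact ⟨vInf.2, hvInf⟩
    | tail _ hbc ih =>
      obtain ⟨e, hsrc, hhead⟩ := hbc
      obtain ⟨hb', hvis⟩ := ih
      obtain ⟨hT, hvis'⟩ := hclosure ⟨_, hb'⟩ hvis e hsrc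
      exact ⟨hhead ▸ hT, by subst hhead; exact hvis'⟩
  obtain ⟨hb, -⟩ := hchain t (S.strongly_connected vInf.1 t)
  exact hb ht

lemma route_eq (x : V) (ρ : S.RConf) :
    ∃ n, (S.step^[n] (x, ρ)).1 ∈ S.T ∧ S.route x ρ = S.step^[n] (x, ρ) := by
  have h := route_terminates S x ρ
  rw [RotorSystem.route]
  rw [dif_pos h]
  exact ⟨_, Nat.find_spec h, rfl⟩

lemma addAtFire (v : S.V0) (ρ : S.RConf) (c : S.PConf) :
    ∃ l, FireSeq S l ((fun w => c w + if w = v then 1 else 0), ρ) (c, S.addAt v ρ) := by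
  obtain ⟨n, hn, hr⟩ := route_eq S v.1 ρ
  obtain ⟨l, hl⟩ := stepFire S n v.1 ρ c hn
  refine ⟨l, ?_⟩
  have h1 : (fun w : S.V0 => c w + if w.1 = v.1 then 1 else 0) =
      (fun w : S.V0 => c w + if w = v then 1 else 0) := by
    funext w
    simp [Subtype.ext_iff]
  have h2 : S.addAt v ρ = (S.step^[n] (v.1, ρ)).2 := by
    rw [RotorSystem.addAt, hr]
  rw [← h1, h2]
  exact hl

lemma iterFire (k : ℕ) : ∀ (v : S.V0) (ρ : S.RConf) (c : S.PConf),
    ∃ l, FireSeq S l ((fun w => c w + if w = v then k else 0), ρ)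
      (c, (S.addAt v)^[k] ρ) := by
  induction k with
  | zero =>
    intro v ρ c
    refine ⟨[], ?_⟩
    show ((fun w : S.V0 => c w + if w = v then 0 else 0), ρ) = (c, ρ)
    have : (fun w : S.V0 => c w + if w = v then 0 else 0) = c := by
      funext w
      split_ifs <;> omega
    rw [this]
  | succ k ih =>
    intro v ρ c
    obtain ⟨l₁, h₁⟩ := addAtFire S v ρ (fun w => c w + if w = v then k else 0)
    obtain ⟨l₂, h₂⟩ := ih v (S.addAt v ρ) c
    refine ⟨l₁ ++ l₂, ?_⟩
    rw [Function.iterate_succ_apply]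
    refine fireSeq_append S ?_ h₂
    have : (fun w : S.V0 => (c w + if w = v then k else 0) + if w = v then 1 else 0) =
        (fun w : S.V0 => c w + if w = v then k + 1 else 0) := by
      funext w
      split_ifs <;> omega
    rw [← this]
    exact h₁

lemma actFireList (σ : S.PConf) : ∀ (L : List S.V0) (ρ : S.RConf) (c : S.PConf),
    ∃ l, FireSeq S l ((fun w => c w + L.count w * σ w), ρ)
      (c, L.foldr (fun v r => (S.addAt v)^[σ v] r) ρ) := by
  intro L
  induction L with
  | nil =>
    intro ρ c
    refine ⟨[], ?_⟩
    show ((fun w : S.V0 => c w + List.count w [] * σ w), ρ) = (c, _)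
    have : (fun w : S.V0 => c w + List.count w [] * σ w) = c := by
      funext w
      simp
    rw [this]
    rfl
  | cons v L ih =>
    intro ρ c
    obtain ⟨l₁, h₁⟩ := ih ρ (fun w => c w + if w = v then σ v else 0)
    obtain ⟨l₂, h₂⟩ :=
      iterFire S (σ v) v (L.foldr (fun v r => (S.addAt v)^[σ v] r) ρ) c
    refine ⟨l₁ ++ l₂, ?_⟩
    have hcnt : (fun w : S.V0 => c w + List.count w (v :: L) * σ w) =
        (fun w : S.V0 => (c w + if w = v then σ v else 0) + List.count w L * σ w) := by
      funext w
      rw [List.count_cons]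
      by_cases h : w = v
      · subst h
        simp only [beq_self_eq_true, if_true, if_pos rfl, Nat.add_mul, one_mul]
        ring
      · simp only [beq_iff_eq, if_neg (fun hh : v = w => h hh.symm), if_neg h, add_zero,
          Nat.add_zero]
    rw [hcnt]
    exact fireSeq_append S h₁ h₂

lemma actFire (σ : S.PConf) (ρ : S.RConf) (c : S.PConf) :
    ∃ l, FireSeq S l ((fun w => c w + σ w), ρ) (c, S.act σ ρ) := by
  obtain ⟨l, hl⟩ := actFireList S σ Finset.univ.toList ρ c
  refine ⟨l, ?_⟩
  have hcnt : (fun w : S.V0 => c w + (Finset.univ.toList.count w) * σ w) =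
      (fun w : S.V0 => c w + σ w) := by
    funext w
    rw [List.count_eq_one_of_mem (Finset.nodup_toList _) (by simp), one_mul]
  rw [← hcnt, RotorSystem.act]
  exact hl

lemma next_iterate_src (e : E) (k : ℕ) : S.src (S.next^[k] e) = S.src e := by
  induction k with
  | zero => rfl
  | succ k ih => rw [Function.iterate_succ_apply', S.next_src, ih]

lemma cycle_lemma (v : V) (e₀ : E) (he : S.src e₀ = v) :
    S.next^[S.outdeg v] e₀ = e₀ ∧
    ∀ w : V, (∑ j ∈ Finset.range (S.outdeg v),
        if w = S.head (S.next^[j+1] e₀) then 1 else 0) = S.numArcs v w := by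
  classical
  obtain ⟨p, hp0, hp⟩ := exists_period S
  set A := Finset.univ.filter (fun e : E => S.src e = v) with hA
  have hmem : ∀ k, S.next^[k] e₀ ∈ A := by
    intro k
    simp only [hA, Finset.mem_filter, Finset.mem_univ, true_and]
    rw [next_iterate_src]
    exact he
  have hP : ∃ m, S.next^[m+1] e₀ = e₀ := by
    refine ⟨p - 1, ?_⟩
    rw [Nat.sub_add_cancel hp0]
    exact hp e₀
  set q := Nat.find hP + 1 with hqdef
  have hq : S.next^[q] e₀ = e₀ := Nat.find_spec hP
  have hq0 : 0 < q := by omega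
  have hqmin : ∀ m, 0 < m → m < q → S.next^[m] e₀ ≠ e₀ := by
    intro m hm0 hmq hc
    refine Nat.find_min hP (m := m - 1) (by omega) ?_
    rw [show m - 1 + 1 = m from by omega]
    exact hc
  have hmul : ∀ m, S.next^[q * m] e₀ = e₀ := by
    intro m
    induction m with
    | zero => rfl
    | succ m ih =>
      rw [show q * (m + 1) = q + q * m by ring, Function.iterate_add_apply, ih, hq]
  have hinj : ∀ i < q, ∀ j < q, S.next^[i] e₀ = S.next^[j] e₀ → i = j := by
    have key : ∀ i j, i < j → j < q → S.next^[i] e₀ = S.next^[j] e₀ → False := by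
      intro i j hij hj hEq
      have hcan : S.next^[i] (S.next^[j - i] e₀) = S.next^[i] e₀ := by
        rw [← Function.iterate_add_apply, show i + (j - i) = j by omega]
        exact hEq.symm
      exact hqmin (j - i) (by omega) (by omega)
        ((S.next_bijective.injective.iterate i) hcan)
    intro i hi j hj hEq
    rcases Nat.lt_trichotomy i j with h | h | h
    · exact absurd hEq (fun hh => key i j h hj hh)
    · exact h
    · exact absurd hEq.symm (fun hh => key j i h hi hh)
  have hsurj : ∀ e' ∈ A, ∃ j, j < q ∧ S.next^[j] e₀ = e' := by
    intro e' he'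
    obtain ⟨k, hk⟩ := S.next_cyclic e₀ e' (by
      rw [he]
      exact ((Finset.mem_filter.mp he').2).symm)
    refine ⟨k % q, Nat.mod_lt _ hq0, ?_⟩
    have : S.next^[k] e₀ = S.next^[k % q] (S.next^[q * (k / q)] e₀) := by
      rw [← Function.iterate_add_apply]
      congr 1
      exact (Nat.mod_add_div k q).symm
    rw [← hk, this, hmul]
  have hcard : S.outdeg v = q := by
    have : (Finset.range q).card = A.card := by
      refine Finset.card_bij (fun j _ => S.next^[j] e₀) (fun j _ => hmem j) ?_ ?_
      · intro i hi j hj hEq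
        exact hinj i (Finset.mem_range.mp hi) j (Finset.mem_range.mp hj) hEq
      · intro e' he'
        obtain ⟨j, hj, hje⟩ := hsurj e' he'
        exact ⟨j, Finset.mem_range.mpr hj, hje⟩
    rw [RotorSystem.outdeg, ← hA, ← this, Finset.card_range]
  constructor
  · rw [hcard]
    exact hq
  · intro w
    have hnum : S.numArcs v w = ∑ e ∈ A, if w = S.head e then 1 else 0 := by
      rw [RotorSystem.numArcs, ← Finset.card_filter]
      congr 1
      rw [hA, Finset.filter_filter]
      apply Finset.filter_congr
      intro e _
      constructor
      · rintro ⟨h1, h2⟩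
        exact ⟨h1, h2.symm⟩
      · rintro ⟨h1, h2⟩
        exact ⟨h1, h2.symm⟩
    rw [hnum, hcard]
    refine Finset.sum_bij (fun j _ => S.next^[j+1] e₀) (fun j _ => hmem _) ?_ ?_ ?_
    · intro i hi j hj hEq
      have hi' := Finset.mem_range.mp hi
      have hj' := Finset.mem_range.mp hj
      have h1 : S.next^[i+1] e₀ = S.next^[j+1] e₀ := hEq
      rw [Function.iterate_succ_apply', Function.iterate_succ_apply'] at h1
      exact hinj i hi' j hj' (S.next_bijective.injective h1)
    · intro e' he'
      obtain ⟨j, hj, hje⟩ := hsurj e' he'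
      rcases Nat.eq_zero_or_pos j with rfl | hj0
      · refine ⟨q - 1, Finset.mem_range.mpr (by omega), ?_⟩
        show S.next^[q - 1 + 1] e₀ = e'
        rw [show q - 1 + 1 = q from by omega, hq]
        exact hje
      · refine ⟨j - 1, Finset.mem_range.mpr (by omega), ?_⟩
        show S.next^[j - 1 + 1] e₀ = e'
        rw [show j - 1 + 1 = j from by omega]
        exact hje
    · intro j _
      rfl

/-- The rotor configuration with the rotor at `v` advanced `k` times. -/
def rot (ρ : S.RConf) (v : S.V0) (k : ℕ) : S.RConf :=
  ⟨Function.update ρ.1 v (S.next^[k] (ρ.1 v)), by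
    intro w
    rcases eq_or_ne w v with rfl | hw
    · rw [Function.update_self, next_iterate_src]
      exact ρ.2 w
    · rw [Function.update_of_ne hw]
      exact ρ.2 w⟩

lemma fireIterCycle (v : S.V0) (ρ : S.RConf) (c : S.PConf) :
    ∀ k, k ≤ c v → ∃ l, FireSeq S l (c, ρ)
      ((fun w => (if w = v then c w - k else c w) +
        ∑ j ∈ Finset.range k, if w.1 = S.head (S.next^[j+1] (ρ.1 v)) then 1 else 0),
       rot S ρ v k) := by
  intro k
  induction k with
  | zero =>
    intro _
    refine ⟨[], ?_⟩
    show (c, ρ) = _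
    refine Prod.ext ?_ ?_
    · funext w
      simp
    · apply Subtype.ext
      show ρ.1 = Function.update ρ.1 v (S.next^[0] (ρ.1 v))
      rw [Function.iterate_zero_apply, Function.update_eq_self]
  | succ k ih =>
    intro hk
    obtain ⟨l, hl⟩ := ih (by omega)
    refine ⟨l ++ [v], fireSeq_append S hl ⟨?_, ?_⟩⟩
    · show 0 < (if v = v then c v - k else c v) + ∑ j ∈ Finset.range k, _
      rw [if_pos rfl]
      have : 0 < c v - k := by omega
      omega
    · show fire S v _ = _
      refine Prod.ext ?_ ?_
      · funext w
        have hrot : (rot S ρ v k).1 v = S.next^[k] (ρ.1 v) := Function.update_self _ _ _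
        show (if w = v then
            ((if w = v then c w - k else c w) + ∑ j ∈ Finset.range k,
              if w.1 = S.head (S.next^[j+1] (ρ.1 v)) then 1 else 0) - 1
          else ((if w = v then c w - k else c w) + ∑ j ∈ Finset.range k,
              if w.1 = S.head (S.next^[j+1] (ρ.1 v)) then 1 else 0)) +
          (if w.1 = S.head (S.next ((rot S ρ v k).1 v)) then 1 else 0) =
          (if w = v then c w - (k+1) else c w) + ∑ j ∈ Finset.range (k+1),
            if w.1 = S.head (S.next^[j+1] (ρ.1 v)) then 1 else 0
        rw [hrot, show S.next (S.next^[k] (ρ.1 v)) = S.next^[k+1] (ρ.1 v) from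
          (Function.iterate_succ_apply' _ _ _).symm, Finset.sum_range_succ]
        by_cases h : w = v
        · subst h
          rw [if_pos rfl, if_pos rfl, if_pos rfl]
          have : k < c w := hk
          omega
        · rw [if_neg h, if_neg h, if_neg h]
          omega
      · apply Subtype.ext
        have hrot : (rot S ρ v k).1 v = S.next^[k] (ρ.1 v) := Function.update_self _ _ _
        show Function.update (rot S ρ v k).1 v (S.next ((rot S ρ v k).1 v)) =
          Function.update ρ.1 v (S.next^[k+1] (ρ.1 v))
        rw [hrot]
        show Function.update (Function.update ρ.1 v (S.next^[k] (ρ.1 v))) v _ = _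
        rw [Function.update_idem, show S.next (S.next^[k] (ρ.1 v)) = S.next^[k+1] (ρ.1 v) from
          (Function.iterate_succ_apply' _ _ _).symm]

lemma fireCycle (v : S.V0) (ρ : S.RConf) (c : S.PConf) (hc : S.outdeg v.1 ≤ c v) :
    ∃ l, FireSeq S l (c, ρ)
      ((fun w => (if w = v then c w - S.outdeg v.1 else c w) + S.numArcs v.1 w.1), ρ) := by
  obtain ⟨hcyc, hsum⟩ := cycle_lemma S v.1 (ρ.1 v) (ρ.2 v)
  obtain ⟨l, hl⟩ := fireIterCycle S v ρ c (S.outdeg v.1) hc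
  refine ⟨l, ?_⟩
  have h1 : rot S ρ v (S.outdeg v.1) = ρ := by
    apply Subtype.ext
    show Function.update ρ.1 v (S.next^[S.outdeg v.1] (ρ.1 v)) = ρ.1
    rw [hcyc, Function.update_eq_self]
  have h2 : (fun w : S.V0 => (if w = v then c w - S.outdeg v.1 else c w) +
      ∑ j ∈ Finset.range (S.outdeg v.1),
        if w.1 = S.head (S.next^[j+1] (ρ.1 v)) then 1 else 0) =
      (fun w : S.V0 => (if w = v then c w - S.outdeg v.1 else c w) + S.numArcs v.1 w.1) := by
    funext w
    rw [hsum w.1]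
  rw [h1, h2] at hl
  exact hl

lemma toppleFire (σ : S.PConf) (ρ : S.RConf) :
    ∃ l, FireSeq S l (σ, ρ) (S.toppleStep σ, ρ) := by
  classical
  suffices h : ∀ B : Finset S.V0, ∃ l, FireSeq S l (σ, ρ)
      ((fun w => (if S.outdeg w.1 ≤ σ w ∧ w ∈ B then σ w - S.outdeg w.1 else σ w) +
        ∑ u ∈ B, if S.outdeg u.1 ≤ σ u then S.numArcs u.1 w.1 else 0), ρ) by
    obtain ⟨l, hl⟩ := h Finset.univ
    refine ⟨l, ?_⟩
    have heq : (fun w : S.V0 =>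
        (if S.outdeg w.1 ≤ σ w ∧ w ∈ Finset.univ then σ w - S.outdeg w.1 else σ w) +
        ∑ u ∈ Finset.univ, if S.outdeg u.1 ≤ σ u then S.numArcs u.1 w.1 else 0) =
        S.toppleStep σ := by
      funext w
      rw [RotorSystem.toppleStep]
      simp only [Finset.mem_univ, and_true]
    rw [← heq]
    exact hl
  intro B
  induction B using Finset.induction_on with
  | empty =>
    refine ⟨[], ?_⟩
    show (σ, ρ) = _
    refine Prod.ext ?_ rfl
    funext w
    simp
  | insert v B hvB ih =>
    obtain ⟨l₁, h₁⟩ := ih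
    by_cases hun : S.outdeg v.1 ≤ σ v
    · obtain ⟨l₂, h₂⟩ := fireCycle S v ρ
        (fun w => (if S.outdeg w.1 ≤ σ w ∧ w ∈ B then σ w - S.outdeg w.1 else σ w) +
          ∑ u ∈ B, if S.outdeg u.1 ≤ σ u then S.numArcs u.1 w.1 else 0)
        (by
          show S.outdeg v.1 ≤
            (if S.outdeg v.1 ≤ σ v ∧ v ∈ B then σ v - S.outdeg v.1 else σ v) +
              ∑ u ∈ B, if S.outdeg u.1 ≤ σ u then S.numArcs u.1 v.1 else 0
          rw [if_neg (fun hh => hvB hh.2)]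
          omega)
      refine ⟨l₁ ++ l₂, fireSeq_append S h₁ ?_⟩
      have heq : (fun w : S.V0 =>
          (if w = v then
            ((if S.outdeg w.1 ≤ σ w ∧ w ∈ B then σ w - S.outdeg w.1 else σ w) +
              ∑ u ∈ B, if S.outdeg u.1 ≤ σ u then S.numArcs u.1 w.1 else 0) -
              S.outdeg v.1
          else ((if S.outdeg w.1 ≤ σ w ∧ w ∈ B then σ w - S.outdeg w.1 else σ w) +
              ∑ u ∈ B, if S.outdeg u.1 ≤ σ u then S.numArcs u.1 w.1 else 0)) +
            S.numArcs v.1 w.1) =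
          (fun w : S.V0 =>
            (if S.outdeg w.1 ≤ σ w ∧ w ∈ insert v B then σ w - S.outdeg w.1 else σ w) +
            ∑ u ∈ insert v B, if S.outdeg u.1 ≤ σ u then S.numArcs u.1 w.1 else 0) := by
        funext w
        rw [Finset.sum_insert hvB, if_pos hun]
        by_cases h : w = v
        · subst h
          rw [if_pos rfl, if_neg (fun hh => hvB hh.2),
            if_pos ⟨hun, Finset.mem_insert_self w B⟩]
          omega
        · rw [if_neg h]
          have : (S.outdeg w.1 ≤ σ w ∧ w ∈ insert v B) ↔ (S.outdeg w.1 ≤ σ w ∧ w ∈ B) := by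
            constructor
            · rintro ⟨h1, h2⟩
              rcases Finset.mem_insert.mp h2 with rfl | h3
              · exact absurd rfl h
              · exact ⟨h1, h3⟩
            · rintro ⟨h1, h2⟩
              exact ⟨h1, Finset.mem_insert_of_mem h2⟩
          rw [if_congr this rfl rfl]
          omega
      rw [← heq]
      exact h₂
    · refine ⟨l₁, ?_⟩
      have heq : (fun w : S.V0 =>
          (if S.outdeg w.1 ≤ σ w ∧ w ∈ B then σ w - S.outdeg w.1 else σ w) +
          ∑ u ∈ B, if S.outdeg u.1 ≤ σ u then S.numArcs u.1 w.1 else 0) =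
          (fun w : S.V0 =>
            (if S.outdeg w.1 ≤ σ w ∧ w ∈ insert v B then σ w - S.outdeg w.1 else σ w) +
            ∑ u ∈ insert v B, if S.outdeg u.1 ≤ σ u then S.numArcs u.1 w.1 else 0) := by
        funext w
        rw [Finset.sum_insert hvB, if_neg hun, zero_add]
        congr 1
        apply if_congr _ rfl rfl
        constructor
        · rintro ⟨h1, h2⟩
          exact ⟨h1, Finset.mem_insert_of_mem h2⟩
        · rintro ⟨h1, h2⟩
          rcases Finset.mem_insert.mp h2 with rfl | h3
          · exact absurd h1 hun
          · exact ⟨h1, h3⟩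
      rw [← heq]
      exact h₁

lemma toppleIterFire (n : ℕ) (σ : S.PConf) (ρ : S.RConf) :
    ∃ l, FireSeq S l (σ, ρ) (S.toppleStep^[n] σ, ρ) := by
  induction n with
  | zero => exact ⟨[], rfl⟩
  | succ n ih =>
    obtain ⟨l₁, h₁⟩ := ih
    obtain ⟨l₂, h₂⟩ := toppleFire S (S.toppleStep^[n] σ) ρ
    rw [Function.iterate_succ_apply']
    exact ⟨l₁ ++ l₂, fireSeq_append S h₁ h₂⟩

lemma stabilizeFire (σ : S.PConf) (ρ : S.RConf) :
    ∃ l, FireSeq S l (σ, ρ) (S.stabilize σ, ρ) := by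
  rw [RotorSystem.stabilize]
  split
  · exact toppleIterFire S _ σ ρ
  · exact ⟨[], rfl⟩

lemma act_eq_of_reach (σ : S.PConf) (ρ : S.RConf) {l : List S.V0} {τ : S.PConf}
    {ρ' : S.RConf} (h : FireSeq S l (σ, ρ) (τ, ρ')) (hτ : ∀ u, τ u = 0) :
    S.act σ ρ = ρ' := by
  obtain ⟨l', hl'⟩ := actFire S σ ρ (fun _ => 0)
  have h0 : (fun w => (0 : ℕ) + σ w) = σ := by funext w; omega
  rw [h0] at hl'
  have := confluence S l' l (σ, ρ) ((fun _ => 0), S.act σ ρ) (τ, ρ') hl'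
    (fun u => rfl) h hτ
  exact congrArg Prod.snd this

end RotorAux

open RotorSystem in
/-- **Lemma (the action descends to the sandpile monoid).**
For every particle configuration `σ` and rotor configuration `ρ`, `σ°ρ = σρ`; hence
the action of particle configurations on rotor configurations descends to an action
of the sandpile monoid `Q°` (stable configurations under `(σ₁,σ₂) ↦ (σ₁+σ₂)°`). -/
theorem stabilize_act {V E : Type} [Fintype V] [DecidableEq V] [Fintype E]
    [DecidableEq E] (S : RotorSystem V E) :
    (∀ (σ : S.PConf) (ρ : S.RConf), S.act (S.stabilize σ) ρ = S.act σ ρ) ∧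
    (∀ (σ₁ σ₂ : S.PConf) (ρ : S.RConf),
      S.act (S.stabilize (σ₁ + σ₂)) ρ = S.act σ₁ (S.act σ₂ ρ)) := by
  have key : ∀ (σ : S.PConf) (ρ : S.RConf), S.act (S.stabilize σ) ρ = S.act σ ρ := by
    intro σ ρ
    obtain ⟨l₁, h₁⟩ := RotorAux.stabilizeFire S σ ρ
    obtain ⟨l₂, h₂⟩ := RotorAux.actFire S (S.stabilize σ) ρ (fun _ => 0)
    have h0 : (fun w => (0 : ℕ) + S.stabilize σ w) = S.stabilize σ := by funext w; omega
    rw [h0] at h₂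
    exact (RotorAux.act_eq_of_reach S σ ρ (RotorAux.fireSeq_append S h₁ h₂)
      (fun u => rfl)).symm
  refine ⟨key, ?_⟩
  intro σ₁ σ₂ ρ
  rw [key]
  obtain ⟨l₁, h₁⟩ := RotorAux.actFire S σ₂ ρ σ₁
  obtain ⟨l₂, h₂⟩ := RotorAux.actFire S σ₁ (S.act σ₂ ρ) (fun _ => 0)
  have h0 : (fun w => (0 : ℕ) + σ₁ w) = σ₁ := by funext w; omega
  rw [h0] at h₂
  have hσ : (fun w => σ₁ w + σ₂ w) = σ₁ + σ₂ := rfl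
  rw [hσ] at h₁
  exact RotorAux.act_eq_of_reach S (σ₁ + σ₂) ρ (RotorAux.fireSeq_append S h₁ h₂)
    (fun u => rfl)
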